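/- arXiv:1406.2399 — 2 statements merged into one kernel-verified Lean document; each statement's English description precedes it below -/
import Mathlib

section
/- Model form of the paper's main theorem (Theorem 5.1): Let μ be a nonzero Borel measure on ℝ with ∫_ℝ dμ(λ)/(1+λ²) = 1 and let M be its Herglotz transform. Fix a real number κ with 0 ≤ κ < 1. For z in the open upper half-plane, Im M(z) > 0, so M(z) + i ≠ 0 and, setting s(z) = (M(z) − i)/(M(z) + i), one has |s(z)| < 1, hence κ·s(z) − 1 ≠ 0; define the characteristic function S(z) = (s(z) − κ)/(κ·s(z) − 1), the impedance function V(z) = ((1−κ)/(1+κ))·M(z) (so that 1 − i·V(z) ≠ 0), and the transfer function W(z) = (1 − i·V(z))/(1 + i·V(z)). Then for every z with Im z > 0 one has S(z)·(1 − i·V(z)) = 1 + i·V(z); in particular, whenever 1 + i·V(z) ≠ 0, S(z)·W(z) = 1, i.e., the transfer function and the characteristic function are reciprocals of each other. -/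
open MeasureTheory Complex

/-- The Herglotz transform of a Borel measure `μ` on `ℝ`:
`M(z) = ∫ (1/(t - z) - t/(1 + t²)) dμ(t)`. -/
noncomputable def herglotz (μ : Measure ℝ) (z : ℂ) : ℂ :=
  ∫ t : ℝ, (1 / ((t : ℂ) - z) - (t : ℂ) / (1 + (t : ℂ) ^ 2)) ∂μ

lemma herglotz_im_pos (μ : Measure ℝ) (hμ : μ ≠ 0)
    (hint : Integrable (fun t : ℝ => 1 / (1 + t ^ 2)) μ)
    (z : ℂ) (hz : 0 < z.im) : 0 < (herglotz μ z).im := by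
  have hd1 : ∀ t : ℝ, (t : ℂ) - z ≠ 0 := by
    intro t h
    rw [sub_eq_zero] at h
    rw [← h] at hz
    simp at hz
  set a := z.re with ha
  set b := z.im with hb
  have hbpos : 0 < b := hz
  set f : ℝ → ℂ := fun t => 1 / ((t : ℂ) - z) - (t : ℂ) / (1 + (t : ℂ) ^ 2) with hf_def
  have hre : ∀ t : ℝ, (1 + (t : ℂ) ^ 2) = ((1 + t ^ 2 : ℝ) : ℂ) := by
    intro t; push_cast; ring
  have h1t : ∀ t : ℝ, (0:ℝ) < 1 + t ^ 2 := fun t => by positivity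
  have hd2 : ∀ t : ℝ, (1 + (t : ℂ) ^ 2) ≠ 0 := by
    intro t
    rw [hre t]
    exact_mod_cast (h1t t).ne'
  have hnsq : ∀ t : ℝ, Complex.normSq ((t : ℂ) - z) = (t - a) ^ 2 + b ^ 2 := by
    intro t
    simp [Complex.normSq_apply, Complex.sub_re, Complex.sub_im, ← ha, ← hb]
    ring
  have hnsqpos : ∀ t : ℝ, (0:ℝ) < (t - a) ^ 2 + b ^ 2 := fun t => by positivity
  set C : ℝ := (2 * b ^ 2 + 1 + 2 * a ^ 2) / b ^ 2 with hC_def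
  have hC0 : 0 < C := by positivity
  have hC : ∀ t : ℝ, 1 + t ^ 2 ≤ C * ((t - a) ^ 2 + b ^ 2) := by
    intro t
    rw [hC_def, div_mul_eq_mul_div, le_div_iff₀ (by positivity)]
    nlinarith [sq_nonneg (b * (t - 2 * a)), sq_nonneg (t - a), sq_nonneg b, sq_nonneg (b*b)]
  have hfe : ∀ t : ℝ, f t = (1 + (t : ℂ) * z) / (((t : ℂ) - z) * (1 + (t : ℂ) ^ 2)) := by
    intro t
    rw [hf_def]
    field_simp [hd1 t, hd2 t]
    ring
  set K1 : ℝ := 2 + 2 * a ^ 2 + b ^ 2 with hK1_def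
  have hK1pos : 0 < K1 := by positivity
  have hn1 : ∀ t : ℝ, Complex.normSq (1 + (t : ℂ) * z) ≤ K1 * (1 + t ^ 2) := by
    intro t
    simp [Complex.normSq_apply, Complex.add_re, Complex.add_im, Complex.mul_re,
      Complex.mul_im, ← ha, ← hb, hK1_def]
    nlinarith [sq_nonneg (t - a), sq_nonneg (t * b)]
  set K : ℝ := Real.sqrt (K1 * C) with hK_def
  have hK2 : K ^ 2 = K1 * C := Real.sq_sqrt (by positivity)
  have hKpos : 0 ≤ K := Real.sqrt_nonneg _
  have hbound : ∀ t : ℝ, ‖f t‖ ≤ K * (1 / (1 + t ^ 2)) := by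
    intro t
    have hsq : Complex.normSq (f t) ≤ (K * (1 / (1 + t ^ 2))) ^ 2 := by
      have hrw : Complex.normSq (f t)
          = Complex.normSq (1 + (t : ℂ) * z) / (((t - a) ^ 2 + b ^ 2) * (1 + t ^ 2) ^ 2) := by
        rw [hfe t, Complex.normSq_div, Complex.normSq_mul, hre t, Complex.normSq_ofReal,
          hnsq t]
        ring_nf
      rw [hrw]
      have hden_ge : (1 + t ^ 2) / C ≤ (t - a) ^ 2 + b ^ 2 := by
        rw [div_le_iff₀ hC0]
        linarith [hC t, mul_comm C ((t - a) ^ 2 + b ^ 2)]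
      have step : Complex.normSq (1 + (t : ℂ) * z) / (((t - a) ^ 2 + b ^ 2) * (1 + t ^ 2) ^ 2)
          ≤ (K1 * (1 + t ^ 2)) / (((1 + t ^ 2) / C) * (1 + t ^ 2) ^ 2) := by
        apply div_le_div₀ (by positivity) (hn1 t) (by positivity)
        exact mul_le_mul_of_nonneg_right hden_ge (by positivity)
      refine step.trans (le_of_eq ?_)
      rw [mul_pow, hK2]
      field_simp
    have habs : ‖f t‖ = Real.sqrt (Complex.normSq (f t)) := by
      rw [Complex.norm_def]
    rw [habs]
    have h2 : Real.sqrt (Complex.normSq (f t)) ≤ Real.sqrt ((K * (1 / (1 + t ^ 2))) ^ 2) :=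
      Real.sqrt_le_sqrt hsq
    rwa [Real.sqrt_sq (by positivity)] at h2
  have hmeas : AEStronglyMeasurable f μ := by
    apply Continuous.aestronglyMeasurable
    apply Continuous.sub
    · exact continuous_const.div (Complex.continuous_ofReal.sub continuous_const) hd1
    · exact Complex.continuous_ofReal.div
        (continuous_const.add (Complex.continuous_ofReal.pow 2)) hd2
  have hf : Integrable f μ := by
    refine Integrable.mono' (hint.const_mul K) hmeas (ae_of_all _ ?_)
    intro t
    simpa using hbound t
  have himeq : ∀ t : ℝ, (f t).im = b / Complex.normSq ((t : ℂ) - z) := by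
    intro t
    rw [hf_def]
    simp only [Complex.sub_im]
    have h2 : ((t : ℂ) / (1 + (t : ℂ) ^ 2)).im = 0 := by
      rw [hre t, ← Complex.ofReal_div]
      exact Complex.ofReal_im _
    rw [h2, sub_zero, one_div, Complex.inv_im, Complex.sub_im]
    simp [← hb]
  have him : (herglotz μ z).im = ∫ t, b / Complex.normSq ((t : ℂ) - z) ∂μ := by
    have h := integral_im (𝕜 := ℂ) hf
    simp only [RCLike.im_eq_complex_im] at h
    rw [herglotz, ← h]
    congr 1
    funext t
    exact himeq t
  rw [him]
  have hgpos : ∀ t : ℝ, 0 < b / Complex.normSq ((t : ℂ) - z) := by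
    intro t
    exact div_pos hbpos (Complex.normSq_pos.mpr (hd1 t))
  have hgi : Integrable (fun t : ℝ => b / Complex.normSq ((t : ℂ) - z)) μ := by
    refine hf.im.congr (ae_of_all _ ?_)
    intro t
    exact himeq t
  rw [integral_pos_iff_support_of_nonneg (fun t => (hgpos t).le) hgi]
  have hsupp : Function.support (fun t : ℝ => b / Complex.normSq ((t : ℂ) - z)) = Set.univ :=
    Set.eq_univ_of_forall fun t => Function.mem_support.mpr (hgpos t).ne'
  rw [hsupp]
  exact Measure.measure_univ_pos.mpr hμ

/-- Model form of the paper's main theorem (Theorem 5.1): the transfer function and the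
characteristic function are reciprocals of each other. -/
theorem transfer_eq_reciprocal_of_characteristic
    (μ : Measure ℝ) (hμ : μ ≠ 0)
    (hint : Integrable (fun t : ℝ => 1 / (1 + t ^ 2)) μ)
    (hnorm : (∫ t : ℝ, 1 / (1 + t ^ 2) ∂μ) = 1)
    (κ : ℝ) (hκ0 : 0 ≤ κ) (hκ1 : κ < 1)
    (z : ℂ) (hz : 0 < z.im) :
    let M : ℂ := herglotz μ z
    let s : ℂ := (M - I) / (M + I)
    let S : ℂ := (s - (κ : ℂ)) / ((κ : ℂ) * s - 1)
    let V : ℂ := (((1 - κ) / (1 + κ) : ℝ) : ℂ) * M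
    let W : ℂ := (1 - I * V) / (1 + I * V)
    0 < M.im ∧ M + I ≠ 0 ∧ ‖s‖ < 1 ∧ (κ : ℂ) * s - 1 ≠ 0 ∧
      1 - I * V ≠ 0 ∧ S * (1 - I * V) = 1 + I * V ∧
      (1 + I * V ≠ 0 → S * W = 1) := by
  intro M s S V W
  have hM : 0 < M.im := herglotz_im_pos μ hμ hint z hz
  have hMI : M + I ≠ 0 := by
    intro h
    have h2 := congrArg Complex.im h
    simp [Complex.add_im] at h2
    linarith
  have habsnum : ‖M - I‖ < ‖M + I‖ := by
    rw [Complex.norm_def, Complex.norm_def]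
    apply Real.sqrt_lt_sqrt (Complex.normSq_nonneg _)
    simp [Complex.normSq_apply, Complex.sub_re, Complex.sub_im, Complex.add_re, Complex.add_im]
    nlinarith
  have habspos : 0 < ‖M + I‖ := norm_pos_iff.mpr hMI
  have habs : ‖s‖ < 1 := by
    show ‖(M - I) / (M + I)‖ < 1
    rw [norm_div, div_lt_one habspos]
    exact habsnum
  have hks : (κ : ℂ) * s - 1 ≠ 0 := by
    intro h
    have h1 : (κ : ℂ) * s = 1 := by
      have := sub_eq_zero.mp h
      exact this
    have h2 : ‖(κ : ℂ) * s‖ = ‖(1:ℂ)‖ := by rw [h1]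
    rw [norm_mul, Complex.norm_of_nonneg hκ0, norm_one] at h2
    nlinarith [norm_nonneg s]
  have hκ1' : (0:ℝ) < 1 + κ := by linarith
  have hc : (0:ℝ) < (1 - κ) / (1 + κ) := div_pos (by linarith) hκ1'
  have hVim : V.im = ((1 - κ) / (1 + κ)) * M.im := by
    show ((((1 - κ) / (1 + κ) : ℝ) : ℂ) * M).im = _
    simp only [Complex.mul_im, Complex.ofReal_re, Complex.ofReal_im]
    ring
  have hden : 1 - I * V ≠ 0 := by
    intro h
    have h2 := congrArg Complex.re h
    simp [Complex.sub_re, Complex.mul_re, Complex.I_re, Complex.I_im] at h2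
    rw [hVim] at h2
    nlinarith [mul_pos hc hM]
  have hcast : (((1 - κ) / (1 + κ) : ℝ) : ℂ) = ((1:ℂ) - κ) / (1 + κ) := by push_cast; ring
  have h1κ : ((1:ℂ) + κ) ≠ 0 := by
    intro h
    have h2 := congrArg Complex.re h
    simp at h2
    linarith
  have hksnum : (κ : ℂ) * (M - I) - (M + I) ≠ 0 := by
    intro h
    apply hks
    show (κ : ℂ) * ((M - I) / (M + I)) - 1 = 0
    field_simp
    linear_combination h
  have hmain : S * (1 - I * V) = 1 + I * V := by
    show ((M - I) / (M + I) - (κ : ℂ)) / ((κ : ℂ) * ((M - I) / (M + I)) - 1) *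
        (1 - I * ((((1 - κ) / (1 + κ) : ℝ) : ℂ) * M))
      = 1 + I * ((((1 - κ) / (1 + κ) : ℝ) : ℂ) * M)
    rw [hcast]
    have hks2 : (κ : ℂ) * ((M - I) / (M + I)) - 1 ≠ 0 := hks
    have hrw : (κ : ℂ) * ((M - I) / (M + I)) - 1 = ((κ:ℂ)*(M-I) - (M+I))/(M+I) := by
      field_simp
    rw [hrw]
    rw [div_mul_eq_mul_div, div_eq_iff (div_ne_zero hksnum hMI)]
    field_simp
    ring_nf
    simp only [Complex.I_sq]
    ring
  refine ⟨hM, hMI, habs, hks, hden, hmain, ?_⟩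
  intro h
  show S * ((1 - I * V) / (1 + I * V)) = 1
  rw [← mul_div_assoc, hmain, div_self h]
end

section
/- Example 1, Livšic function formula (equation (7.5)): Let ℓ > 0 be real and z ∈ ℂ with Im z > 0. Define g_z(t) = e^{−izt}, g₊(t) = (√2/√(e^{2ℓ} − 1))·e^{t}, and g₋(t) = (√2/√(1 − e^{−2ℓ}))·e^{−t}. Then ∫₀^ℓ g_z(t)·conj(g₊(t)) dt ≠ 0, the complex number 1 − e^ℓ·e^{−iℓz} is nonzero, and ((z − i)/(z + i))·( ∫₀^ℓ g_z(t)·conj(g₋(t)) dt )/( ∫₀^ℓ g_z(t)·conj(g₊(t)) dt ) = (e^ℓ − e^{−iℓz})/(1 − e^ℓ·e^{−iℓz}). -/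
open Complex intervalIntegral


private lemma livsic_aux (a b c₁ c₂ u v C e : ℂ) (hb : b ≠ 0) (h1 : c₁ ≠ 0) (h2 : c₂ ≠ 0)
    (hC : C ≠ 0) (he : e ≠ 0) (hv : v ≠ 0) (hkey : a * c₁ = b * c₂) :
    a / b * ((C * e * (-u / e / c₂)) / (C * (-v / c₁))) = u / v := by
  field_simp
  linear_combination u * hkey

/-- Example 1, Livšic function formula (equation (7.5)): with the normalized deficiency
vectors `g₊`, `g₋` and deficiency element `g_z`, the Livšic function
`s(z) = ((z-i)/(z+i))·(g_z, g₋)/(g_z, g₊)` of the pair `(Ȧ, A)` equals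
`(e^ℓ - e^{-iℓz})/(1 - e^ℓ e^{-iℓz})`. -/
theorem example1_livsic_function (ℓ : ℝ) (hℓ : 0 < ℓ) (z : ℂ) (hz : 0 < z.im) :
    let gz : ℝ → ℂ := fun t => Complex.exp (-I * z * (t : ℂ))
    let gp : ℝ → ℂ := fun t =>
      ((Real.sqrt 2 / Real.sqrt (Real.exp (2 * ℓ) - 1) : ℝ) : ℂ) * Complex.exp (t : ℂ)
    let gm : ℝ → ℂ := fun t =>
      ((Real.sqrt 2 / Real.sqrt (1 - Real.exp (-2 * ℓ)) : ℝ) : ℂ) * Complex.exp (-(t : ℂ))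
    (∫ t in (0 : ℝ)..ℓ, gz t * starRingEnd ℂ (gp t)) ≠ 0 ∧
      1 - Complex.exp (ℓ : ℂ) * Complex.exp (-I * (ℓ : ℂ) * z) ≠ 0 ∧
      ((z - I) / (z + I)) *
          ((∫ t in (0 : ℝ)..ℓ, gz t * starRingEnd ℂ (gm t)) /
            (∫ t in (0 : ℝ)..ℓ, gz t * starRingEnd ℂ (gp t))) =
        (Complex.exp (ℓ : ℂ) - Complex.exp (-I * (ℓ : ℂ) * z)) /
          (1 - Complex.exp (ℓ : ℂ) * Complex.exp (-I * (ℓ : ℂ) * z)) := by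
  intro gz gp gm
  set Cr : ℝ := Real.sqrt 2 / Real.sqrt (Real.exp (2 * ℓ) - 1) with hCr
  set Dr : ℝ := Real.sqrt 2 / Real.sqrt (1 - Real.exp (-2 * ℓ)) with hDr
  set c₁ : ℂ := 1 - I * z with hc₁def
  set c₂ : ℂ := -1 - I * z with hc₂def
  set W : ℂ := Complex.exp (-I * (ℓ : ℂ) * z) with hW
  -- basic positivity
  have h2ℓ : (1 : ℝ) < Real.exp (2 * ℓ) := by
    rw [show (1:ℝ) = Real.exp 0 by simp]
    exact Real.exp_lt_exp.mpr (by linarith)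
  have hsq1 : 0 < Real.sqrt (Real.exp (2 * ℓ) - 1) := Real.sqrt_pos.mpr (by linarith)
  have hm2ℓ : Real.exp (-2 * ℓ) < 1 := by
    rw [show (1:ℝ) = Real.exp 0 by simp]
    exact Real.exp_lt_exp.mpr (by linarith)
  have hsq2 : 0 < Real.sqrt (1 - Real.exp (-2 * ℓ)) := Real.sqrt_pos.mpr (by linarith)
  have hCrpos : 0 < Cr := div_pos (Real.sqrt_pos.mpr (by norm_num)) hsq1
  have hDrpos : 0 < Dr := div_pos (Real.sqrt_pos.mpr (by norm_num)) hsq2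
  have hCne : (Cr : ℂ) ≠ 0 := by exact_mod_cast hCrpos.ne'
  -- relation between normalizations: Dr = Cr * e^ℓ
  have hsqrel : Real.sqrt (Real.exp (2 * ℓ) - 1)
      = Real.exp ℓ * Real.sqrt (1 - Real.exp (-2 * ℓ)) := by
    have h1 : Real.exp (2 * ℓ) - 1 = Real.exp (2 * ℓ) * (1 - Real.exp (-2 * ℓ)) := by
      rw [mul_sub, mul_one, ← Real.exp_add]
      norm_num
    rw [h1, Real.sqrt_mul (Real.exp_pos _).le, show (2:ℝ) * ℓ = ℓ + ℓ by ring,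
      Real.exp_add, Real.sqrt_mul_self (Real.exp_pos _).le]
  have hDrel : (Dr : ℂ) = (Cr : ℂ) * Complex.exp (ℓ : ℂ) := by
    have : Dr = Cr * Real.exp ℓ := by
      rw [hCr, hDr, hsqrel, div_mul_eq_mul_div, mul_comm (Real.sqrt 2) (Real.exp ℓ),
        mul_div_mul_left _ _ (Real.exp_ne_zero ℓ)]
    rw [this]
    push_cast [Complex.ofReal_exp]
    ring
  -- nonvanishing of c₁, z+I
  have hc₁ : c₁ ≠ 0 := by
    intro h
    have : c₁.re = 0 := by rw [h]; simp
    simp [hc₁def, Complex.sub_re, Complex.mul_re] at this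
    linarith
  have hzI : z + I ≠ 0 := by
    intro h
    have : (z + I).im = 0 := by rw [h]; simp
    simp [Complex.add_im] at this
    linarith
  -- E₁ = exp(c₁ ℓ) = e^ℓ * W
  have hE₁ : Complex.exp (c₁ * ℓ) = Complex.exp (ℓ : ℂ) * W := by
    rw [hW, ← Complex.exp_add]
    congr 1
    rw [hc₁def]; ring
  have hE₁ne : Complex.exp (c₁ * ℓ) - 1 ≠ 0 := by
    intro h
    have habs : ‖Complex.exp (c₁ * ℓ)‖ = 1 := by
      rw [sub_eq_zero] at h; rw [h]; simp
    rw [Complex.norm_exp] at habs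
    have hre : (c₁ * ℓ).re = ℓ * (1 + z.im) := by
      simp [hc₁def, Complex.mul_re, Complex.sub_re, Complex.sub_im, Complex.mul_im]
      ring
    rw [hre, Real.exp_eq_one_iff] at habs
    have : 0 < ℓ * (1 + z.im) := by positivity
    linarith
  -- the first integral
  have hintp : (∫ t in (0 : ℝ)..ℓ, gz t * starRingEnd ℂ (gp t))
      = (Cr : ℂ) * ((Complex.exp (c₁ * ℓ) - 1) / c₁) := by
    have heq : ∀ t : ℝ, gz t * starRingEnd ℂ (gp t) = (Cr : ℂ) * Complex.exp (c₁ * t) := by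
      intro t
      show Complex.exp (-I * z * t) * starRingEnd ℂ ((Cr : ℂ) * Complex.exp (t : ℂ))
        = (Cr : ℂ) * Complex.exp (c₁ * t)
      rw [map_mul, Complex.conj_ofReal, ← Complex.exp_conj, Complex.conj_ofReal,
        ← mul_assoc, mul_comm (Complex.exp (-I * z * t)) ((Cr : ℂ)), mul_assoc,
        ← Complex.exp_add]
      congr 2
      rw [hc₁def]; ring
    rw [intervalIntegral.integral_congr (fun t _ => heq t),
      intervalIntegral.integral_const_mul, integral_exp_mul_complex hc₁]
    simp
  have hIp : (∫ t in (0 : ℝ)..ℓ, gz t * starRingEnd ℂ (gp t)) ≠ 0 := by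
    rw [hintp]
    exact mul_ne_zero hCne (div_ne_zero hE₁ne hc₁)
  have hden : 1 - Complex.exp (ℓ : ℂ) * W ≠ 0 := by
    rw [← hE₁]
    intro h
    apply hE₁ne
    have := sub_eq_zero.mp h
    rw [← this]; ring
  refine ⟨hIp, hden, ?_⟩
  by_cases hzi : z = I
  · have h1 : z - I = 0 := by rw [hzi]; ring
    have h2 : Complex.exp (ℓ : ℂ) - W = 0 := by
      rw [hW, hzi]
      rw [sub_eq_zero]
      congr 1
      rw [show -I * (ℓ : ℂ) * I = (ℓ : ℂ) * (-(I*I)) by ring, Complex.I_mul_I]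
      ring
    rw [h1, h2]
    simp
  · -- c₂ ≠ 0
    have hc₂ : c₂ ≠ 0 := by
      rw [hc₂def, show (-1 : ℂ) - I * z = -I * (z - I) by rw [show -I * (z - I) = -(I*z) + I*I by ring, Complex.I_mul_I]; ring]
      exact mul_ne_zero (neg_ne_zero.mpr I_ne_zero) (sub_ne_zero.mpr hzi)
    have hE₂ : Complex.exp (c₂ * ℓ) = Complex.exp (-(ℓ : ℂ)) * W := by
      rw [hW, ← Complex.exp_add]
      congr 1
      rw [hc₂def]; ring
    have hintm : (∫ t in (0 : ℝ)..ℓ, gz t * starRingEnd ℂ (gm t))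
        = (Dr : ℂ) * ((Complex.exp (c₂ * ℓ) - 1) / c₂) := by
      have heq : ∀ t : ℝ, gz t * starRingEnd ℂ (gm t) = (Dr : ℂ) * Complex.exp (c₂ * t) := by
        intro t
        show Complex.exp (-I * z * t) * starRingEnd ℂ ((Dr : ℂ) * Complex.exp (-(t : ℂ)))
          = (Dr : ℂ) * Complex.exp (c₂ * t)
        rw [map_mul, Complex.conj_ofReal, ← Complex.exp_conj]
        rw [show starRingEnd ℂ (-(t:ℂ)) = -(t:ℂ) by rw [map_neg, Complex.conj_ofReal]]
        rw [← mul_assoc, mul_comm (Complex.exp (-I * z * t)) ((Dr : ℂ)), mul_assoc,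
          ← Complex.exp_add]
        congr 2
        rw [hc₂def]; ring
      rw [intervalIntegral.integral_congr (fun t _ => heq t),
        intervalIntegral.integral_const_mul, integral_exp_mul_complex hc₂]
      simp
    rw [hintp, hintm, hDrel]
    have hkey : (z - I) * c₁ = (z + I) * c₂ := by
      rw [hc₁def, hc₂def]
      linear_combination (2*z) * Complex.I_sq
    have hnum : Complex.exp (ℓ : ℂ) * (Complex.exp (c₂ * ℓ) - 1)
        = -(Complex.exp (ℓ:ℂ) - W) := by
      rw [hE₂, show Complex.exp (ℓ:ℂ) * (Complex.exp (-(ℓ:ℂ)) * W - 1)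
          = Complex.exp (ℓ:ℂ) * Complex.exp (-(ℓ:ℂ)) * W - Complex.exp (ℓ:ℂ) by ring,
        ← Complex.exp_add]
      simp
    have hd1 : Complex.exp (c₁ * ℓ) - 1 = -(1 - Complex.exp (ℓ:ℂ) * W) := by
      rw [hE₁]; ring
    have h3 : Complex.exp (c₂ * ℓ) - 1
        = (-(Complex.exp (ℓ:ℂ) - W)) / Complex.exp (ℓ:ℂ) := by
      rw [eq_div_iff (Complex.exp_ne_zero _), mul_comm, hnum]
    rw [hd1, h3]
    exact livsic_aux (z - I) (z + I) c₁ c₂ (Complex.exp (ℓ:ℂ) - W)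
      (1 - Complex.exp (ℓ:ℂ) * W) (↑Cr) (Complex.exp (ℓ:ℂ)) hzI hc₁ hc₂ hCne
      (Complex.exp_ne_zero _) hden hkey
end
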